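/- For density operators ρ, σ on a d-dimensional Hilbert space with σ = I/d and ‖ρ − σ‖₁ ≤ δ ≤ 1, the von Neumann entropy satisfies S(ρ) ≥ log d − δ log d − h(δ), where h is the binary entropy function (Fannes-type continuity bound). -/

import Mathlib

open Matrix MeasureTheory ComplexOrder

/-- Trace norm ‖A‖₁ = tr √(A† A). -/
noncomputable def traceNorm {n : Type*} [Fintype n] [DecidableEq n] (A : Matrix n n ℂ) : ℝ :=
  (((Matrix.posSemidef_conjTranspose_mul_self A).1.eigenvectorUnitary.1 *
      diagonal (((↑) : ℝ → ℂ) ∘ Real.sqrt ∘ (Matrix.posSemidef_conjTranspose_mul_self A).1.eigenvalues) *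
      (star (Matrix.posSemidef_conjTranspose_mul_self A).1.eigenvectorUnitary :
        Matrix n n ℂ)).trace).re

/-- Von Neumann entropy S(ρ) = −∑ λᵢ log λᵢ (eigenvalues of a Hermitian matrix). -/
noncomputable def vNEntropy {n : Type*} [Fintype n] [DecidableEq n] (ρ : Matrix n n ℂ) : ℝ :=
  if h : ρ.IsHermitian then -∑ i, h.eigenvalues i * Real.log (h.eigenvalues i) else 0

/-- A density operator: positive semidefinite with unit trace. -/
def IsDensity {n : Type*} [Fintype n] [DecidableEq n] (ρ : Matrix n n ℂ) : Prop :=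
  ρ.PosSemidef ∧ ρ.trace = 1

/-- Partial trace over the second tensor factor. -/
noncomputable def ptraceB {a b : Type*} [Fintype a] [Fintype b]
    (A : Matrix (a × b) (a × b) ℂ) : Matrix a a ℂ :=
  fun i j => ∑ k, A (i, k) (j, k)

/-- Partial trace over the first tensor factor. -/
noncomputable def ptraceA {a b : Type*} [Fintype a] [Fintype b]
    (A : Matrix (a × b) (a × b) ℂ) : Matrix b b ℂ :=
  fun i j => ∑ k, A (k, i) (k, j)

/-- Outer product |v⟩⟨v|. -/
noncomputable def outer {n : Type*} (v : n → ℂ) : Matrix n n ℂ :=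
  Matrix.vecMulVec v (star v)

noncomputable instance matrixMeasurableSpace {n m : Type*} [Fintype n] [Fintype m] :
    MeasurableSpace (Matrix n m ℂ) := borel _
instance matrixBorelSpace {n m : Type*} [Fintype n] [Fintype m] :
    BorelSpace (Matrix n m ℂ) := ⟨rfl⟩


section FannesAux

open Real

/-- Subadditivity of `negMulLog`. -/
private lemma nml_subadd {x t : ℝ} (hx : 0 ≤ x) (ht : 0 ≤ t) :
    negMulLog (x + t) ≤ negMulLog x + negMulLog t := by
  rcases hx.eq_or_lt with rfl | hx
  · simp
  rcases ht.eq_or_lt with rfl | ht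
  · simp
  have h1 : Real.log x ≤ Real.log (x + t) := Real.log_le_log hx (by linarith)
  have h2 : Real.log t ≤ Real.log (x + t) := Real.log_le_log ht (by linarith)
  simp only [negMulLog]
  nlinarith [h1, h2, hx.le, ht.le]

/-- `negMulLog (1 - t) ≤ negMulLog t` for `t ≤ 1/2`. -/
private lemma nml_one_sub_le {t : ℝ} (ht : 0 < t) (ht2 : t ≤ 1/2) :
    negMulLog (1 - t) ≤ negMulLog t := by
  have hu : 0 < 1 - t := by linarith
  have k1 : -Real.log (1 - t) ≤ t / (1 - t) := by
    have := Real.log_le_sub_one_of_pos (x := (1 - t)⁻¹) (by positivity)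
    rw [Real.log_inv] at this
    have : -Real.log (1 - t) ≤ (1-t)⁻¹ - 1 := this
    calc -Real.log (1-t) ≤ (1-t)⁻¹ - 1 := this
      _ = t / (1-t) := by field_simp; ring
  have k2 : Real.log t - Real.log (1 - t) ≤ (2*t - 1) / (1 - t) := by
    have := Real.log_le_sub_one_of_pos (x := t / (1 - t)) (by positivity)
    rw [Real.log_div (ne_of_gt ht) (ne_of_gt hu)] at this
    calc Real.log t - Real.log (1-t) ≤ t/(1-t) - 1 := this
      _ = (2*t-1)/(1-t) := by field_simp; ring
  simp only [negMulLog]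
  set A := Real.log t
  set B := Real.log (1 - t)
  have h12 : 0 ≤ 1 - 2*t := by linarith
  have k1' : -(1-t)*B ≤ t := by
    have := (le_div_iff₀ hu).mp k1
    linarith
  have k2' : (1-t)*(A - B) ≤ 2*t - 1 := by
    have := (le_div_iff₀ hu).mp k2
    linarith
  nlinarith [mul_nonneg h12 (by linarith [k1'] : 0 ≤ (1-t)*B + t)]

private lemma nml_up {x t : ℝ} (hx : 0 < x) (ht : 0 ≤ t) (ht2 : t ≤ 1/2) (hxt : x + t ≤ 1) :
    negMulLog x ≤ negMulLog (x + t) + negMulLog t := by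
  rcases ht.eq_or_lt with rfl | ht
  · simp
  set G : ℝ → ℝ := fun y => negMulLog (y + t) - negMulLog y with hG
  have hderiv : ∀ y ∈ Set.Ioo x (1 - t), HasDerivAt G
      ((-Real.log (y + t) - 1) - (-Real.log y - 1)) y := by
    intro y hy
    have hy0 : 0 < y := lt_trans hx hy.1
    have h1 : HasDerivAt (fun y : ℝ => negMulLog (y + t)) (-Real.log (y + t) - 1) y := by
      have := (Real.hasDerivAt_negMulLog (x := y + t) (by positivity)).comp y
        ((hasDerivAt_id y).add_const t)
      simpa [Function.comp_def] using this
    exact h1.sub (Real.hasDerivAt_negMulLog (ne_of_gt hy0))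
  have hanti : AntitoneOn G (Set.Icc x (1 - t)) := by
    apply antitoneOn_of_deriv_nonpos (convex_Icc _ _)
    · exact ((Real.continuous_negMulLog.comp (continuous_id.add continuous_const)).sub
        Real.continuous_negMulLog).continuousOn
    · intro y hy
      rw [interior_Icc] at hy
      exact (hderiv y hy).differentiableAt.differentiableWithinAt
    · intro y hy
      rw [interior_Icc] at hy
      rw [(hderiv y hy).deriv]
      have hy0 : 0 < y := lt_trans hx hy.1
      have := Real.log_le_log hy0 (by linarith : y ≤ y + t)
      linarith
  have hle : G (1 - t) ≤ G x := by
    apply hanti (Set.left_mem_Icc.mpr (by linarith)) (Set.right_mem_Icc.mpr (by linarith))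
      (by linarith)
  have hG1 : G (1 - t) = -negMulLog (1 - t) := by simp [hG]
  have := nml_one_sub_le ht ht2
  simp only [hG] at hle
  have h1t : (1 - t + t : ℝ) = 1 := by ring
  rw [h1t, Real.negMulLog_one] at hle
  linarith [nml_one_sub_le ht ht2]

private lemma nml_term_bound {c p : ℝ} (hc : 0 < c) (hp : 0 ≤ p) (hp1 : p ≤ 1)
    (hhalf : p - c ≤ 1/2) :
    negMulLog c - negMulLog p ≤ negMulLog |p - c| := by
  rcases le_or_gt p c with hle | hlt
  · rw [abs_of_nonpos (by linarith)]
    have := nml_subadd hp (t := c - p) (by linarith)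
    rw [show p + (c - p) = c by ring] at this
    rw [show -(p - c) = c - p by ring]
    linarith
  · rw [abs_of_pos (by linarith)]
    have := nml_up hc (t := p - c) (by linarith) hhalf (by linarith)
    rw [show c + (p - c) = p by ring] at this
    linarith

private lemma nml_sum_le {d : ℕ} (t : Fin d → ℝ) (ht : ∀ i, 0 ≤ t i) {ε : ℝ} (hε : 0 < ε)
    (hsum : ∑ i, t i = ε) :
    ∑ i, negMulLog (t i) ≤ ε * Real.log d - ε * Real.log ε := by
  have hd : 0 < d := by
    rcases Nat.eq_zero_or_pos d with rfl | hd
    · simp at hsum; linarith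
    · exact hd
  have hterm : ∀ i, negMulLog (t i) ≤ t i * (Real.log d - Real.log ε) + (ε / d - t i) := by
    intro i
    rcases (ht i).eq_or_lt with h0 | h0
    · rw [← h0]
      simp only [negMulLog_zero]
      have : (0:ℝ) < ε / d := by positivity
      linarith
    · have hx : (0:ℝ) < ε / (d * t i) := by positivity
      have hlog := Real.log_le_sub_one_of_pos hx
      rw [Real.log_div (ne_of_gt hε) (by positivity), Real.log_mul (by positivity) (ne_of_gt h0)]
        at hlog
      have h2 : t i * (Real.log ε - (Real.log d + Real.log (t i)))
          ≤ t i * (ε / (d * t i) - 1) := by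
        exact mul_le_mul_of_nonneg_left hlog (ht i)
      have h3 : t i * (ε / (d * t i) - 1) = ε / d - t i := by
        field_simp
      rw [h3] at h2
      simp only [negMulLog]
      nlinarith [h2]
  calc ∑ i, negMulLog (t i) ≤ ∑ i, (t i * (Real.log d - Real.log ε) + (ε / d - t i)) :=
        Finset.sum_le_sum fun i _ => hterm i
    _ = ε * Real.log d - ε * Real.log ε := by
        rw [Finset.sum_add_distrib, ← Finset.sum_mul, hsum, Finset.sum_sub_distrib, hsum]
        simp only [Finset.sum_const, Finset.card_univ, Fintype.card_fin, nsmul_eq_mul]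
        field_simp
        ring

private lemma scalar_stepA {d : ℕ} (hd : 0 < d) (p : Fin d → ℝ) (hp0 : ∀ i, 0 ≤ p i)
    (hsum : ∑ i, p i = 1) {ε : ℝ} (hεdef : ∑ i, |p i - (d:ℝ)⁻¹| = ε) (hε1 : ε ≤ 1) :
    Real.log d - ε * Real.log d - Real.binEntropy ε ≤ ∑ i, negMulLog (p i) := by
  set c : ℝ := (d:ℝ)⁻¹ with hc
  have hdR : (0:ℝ) < d := by exact_mod_cast hd
  have hc0 : 0 < c := by positivity
  have hε0 : 0 ≤ ε := by
    rw [← hεdef]; exact Finset.sum_nonneg fun i _ => abs_nonneg _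
  have hp1 : ∀ i, p i ≤ 1 := by
    intro i
    rw [← hsum]
    exact Finset.single_le_sum (fun j _ => hp0 j) (Finset.mem_univ i)
  have hdev : ∑ i, (p i - c) = 0 := by
    rw [Finset.sum_sub_distrib, hsum]
    simp only [Finset.sum_const, Finset.card_univ, Fintype.card_fin, nsmul_eq_mul, hc]
    field_simp
    norm_num
  have hup : ∀ i, p i - c ≤ ε / 2 := by
    intro i
    have h1 : |p i - c| + (p i - c) ≤ ∑ j, (|p j - c| + (p j - c)) :=
      Finset.single_le_sum (f := fun j => |p j - c| + (p j - c))
        (fun j _ => by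
          beta_reduce
          linarith [abs_nonneg (p j - c), neg_abs_le (p j - c)]) (Finset.mem_univ i)
    rw [Finset.sum_add_distrib, hεdef, hdev, add_zero] at h1
    have := le_abs_self (p i - c)
    linarith
  have hterm : ∀ i, negMulLog c - negMulLog (p i) ≤ negMulLog |p i - c| := by
    intro i
    exact nml_term_bound hc0 (hp0 i) (hp1 i) (by linarith [hup i])
  have hsumc : ∑ _i : Fin d, negMulLog c = Real.log d := by
    simp only [Finset.sum_const, Finset.card_univ, Fintype.card_fin, nsmul_eq_mul]
    rw [negMulLog, hc, Real.log_inv]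
    field_simp
  have hkey : Real.log d - ∑ i, negMulLog (p i) ≤ ∑ i, negMulLog |p i - c| := by
    rw [← hsumc, ← Finset.sum_sub_distrib]
    exact Finset.sum_le_sum fun i _ => hterm i
  rcases hε0.eq_or_lt with h0 | h0
  · have hall : ∀ i ∈ Finset.univ, |p i - c| = 0 := by
      intro i _
      have := (Finset.sum_eq_zero_iff_of_nonneg (fun j _ => abs_nonneg (p j - c))).mp
        (hεdef.trans h0.symm)
      exact this i (Finset.mem_univ i)
    have : ∑ i, negMulLog |p i - c| = 0 := by
      apply Finset.sum_eq_zero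
      intro i hi
      rw [hall i hi, negMulLog_zero]
    rw [← h0]
    simp only [zero_mul, Real.binEntropy_zero, sub_zero]
    linarith
  · have hJ := nml_sum_le (fun i => |p i - c|) (fun i => abs_nonneg _) h0 hεdef
    have hbe : ε * (- Real.log ε) ≤ Real.binEntropy ε := by
      rw [Real.binEntropy_eq_negMulLog_add_negMulLog_one_sub]
      have := negMulLog_nonneg (by linarith : (0:ℝ) ≤ 1 - ε) (by linarith : (1:ℝ) - ε ≤ 1)
      rw [negMulLog]
      linarith
    linarith

private lemma scalar_main {d : ℕ} (hd : 0 < d) (p : Fin d → ℝ) (hp0 : ∀ i, 0 ≤ p i)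
    (hsum : ∑ i, p i = 1) (δ : ℝ) (hδ1 : δ ≤ 1)
    (hle : ∑ i, |p i - (d:ℝ)⁻¹| ≤ δ) :
    Real.log d - δ * Real.log d - Real.binEntropy δ ≤ ∑ i, negMulLog (p i) := by
  set ε : ℝ := ∑ i, |p i - (d:ℝ)⁻¹| with hεdef
  have hε0 : 0 ≤ ε := Finset.sum_nonneg fun i _ => abs_nonneg _
  have hεδ : ε ≤ δ := hle
  have hε1 : ε ≤ 1 := hεδ.trans hδ1
  have hA := scalar_stepA hd p hp0 hsum hεdef.symm hε1
  have hp1 : ∀ i, p i ≤ 1 := fun i => by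
    rw [← hsum]; exact Finset.single_le_sum (fun j _ => hp0 j) (Finset.mem_univ i)
  have hH0 : 0 ≤ ∑ i, negMulLog (p i) :=
    Finset.sum_nonneg fun i _ => negMulLog_nonneg (hp0 i) (hp1 i)
  rcases eq_or_lt_of_le hε1 with hεeq | hεlt
  · have hδeq : δ = 1 := le_antisymm hδ1 (by rw [← hεeq]; exact hεδ)
    rw [hδeq]
    simp only [one_mul, Real.binEntropy_one, sub_zero, sub_self, zero_sub]
    linarith
  · set s : ℝ := (δ - ε) / (1 - ε) with hs
    have h1ε : 0 < 1 - ε := by linarith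
    have hs0 : 0 ≤ s := div_nonneg (by linarith) (by linarith)
    have hs1 : s ≤ 1 := by
      rw [hs, div_le_one h1ε]; linarith
    have hδeq : δ = (1 - s) * ε + s * 1 := by
      rw [hs]; field_simp; ring
    have hconc := (Real.strictConcave_binEntropy.concaveOn).2
      (Set.mem_Icc.mpr ⟨hε0, hε1⟩) (Set.mem_Icc.mpr ⟨zero_le_one, le_refl 1⟩)
      (by linarith : (0:ℝ) ≤ 1 - s) hs0 (by ring)
    simp only [smul_eq_mul, Real.binEntropy_one, mul_zero, add_zero] at hconc
    rw [← hδeq] at hconc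
    have hid : Real.log d - δ * Real.log d = (1 - s) * (Real.log d - ε * Real.log d) := by
      rw [hδeq]; ring
    nlinarith [mul_le_mul_of_nonneg_left hA (by linarith : (0:ℝ) ≤ 1 - s), hconc,
      mul_nonneg hs0 hH0, hid]

private lemma traceNorm_shift {d : ℕ} (ρ : Matrix (Fin d) (Fin d) ℂ) (hH : ρ.IsHermitian) :
    traceNorm (ρ - (d : ℂ)⁻¹ • (1 : Matrix (Fin d) (Fin d) ℂ))
      = ∑ i, |hH.eigenvalues i - (d:ℝ)⁻¹| := by
  set U : Matrix (Fin d) (Fin d) ℂ := (hH.eigenvectorUnitary : Matrix (Fin d) (Fin d) ℂ) with hU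
  have hU1 : star U * U = 1 := Matrix.mem_unitaryGroup_iff'.mp hH.eigenvectorUnitary.2
  set A : Matrix (Fin d) (Fin d) ℂ := ρ - (d : ℂ)⁻¹ • 1 with hA
  have hsa : IsSelfAdjoint ρ := hH
  have hAH : Aᴴ = A := by
    rw [hA]
    simp [Matrix.conjTranspose_sub, Matrix.conjTranspose_smul, hH.eq, Complex.star_def,
      map_inv₀, Complex.conj_natCast]
  have hAc : A = cfc (fun x : ℝ => x - (d:ℝ)⁻¹) ρ := by
    rw [cfc_sub (fun x : ℝ => x) (fun _ => (d:ℝ)⁻¹) ρ, cfc_id' ℝ ρ, cfc_const ((d:ℝ)⁻¹) ρ, hA,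
      Algebra.algebraMap_eq_smul_one]
    ext i j
    simp [Matrix.one_apply]
  have hAA : Aᴴ * A = cfc (fun x : ℝ => (x - (d:ℝ)⁻¹) * (x - (d:ℝ)⁻¹)) ρ := by
    rw [hAH, cfc_mul (fun x : ℝ => x - (d:ℝ)⁻¹) (fun x : ℝ => x - (d:ℝ)⁻¹) ρ, ← hAc]
  have hP := Matrix.posSemidef_conjTranspose_mul_self A
  have hT : traceNorm A = ((hP.1).cfc Real.sqrt).trace.re := by
    rw [traceNorm, IsHermitian.cfc, Unitary.conjStarAlgAut_apply]
    rfl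
  rw [hT, ← IsHermitian.cfc_eq, hAA, ← cfc_comp' Real.sqrt _ ρ]
  have hfun : (fun x : ℝ => Real.sqrt ((x - (d:ℝ)⁻¹) * (x - (d:ℝ)⁻¹)))
      = fun x => |x - (d:ℝ)⁻¹| := by
    funext x
    exact Real.sqrt_mul_self_eq_abs _
  rw [hfun, hH.cfc_eq, IsHermitian.cfc, Unitary.conjStarAlgAut_apply, ← hU,
    Matrix.trace_mul_comm, ← Matrix.mul_assoc, hU1, Matrix.one_mul, Matrix.trace_diagonal]
  rw [Complex.re_sum]
  simp [Complex.ofReal_re]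

end FannesAux

/-- Fannes-type bound: if ‖ρ − I/d‖₁ ≤ δ ≤ 1 then
S(ρ) ≥ log d − δ log d − h(δ). -/
theorem fannes_bound_near_maximally_mixed {d : ℕ} (hd : 0 < d)
    (ρ : Matrix (Fin d) (Fin d) ℂ) (hρ : IsDensity ρ)
    (δ : ℝ) (hδ0 : 0 ≤ δ) (hδ1 : δ ≤ 1)
    (h : traceNorm (ρ - (d : ℂ)⁻¹ • (1 : Matrix (Fin d) (Fin d) ℂ)) ≤ δ) :
    Real.log d - δ * Real.log d - Real.binEntropy δ ≤ vNEntropy ρ := by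
  obtain ⟨hpsd, htr⟩ := hρ
  have hH : ρ.IsHermitian := hpsd.1
  have hnn : ∀ i, 0 ≤ hH.eigenvalues i := fun i => hpsd.eigenvalues_nonneg i
  have hsum : ∑ i, hH.eigenvalues i = 1 := by
    have h1 : ρ.trace = ∑ i, (hH.eigenvalues i : ℂ) := by
      conv_lhs => rw [hH.spectral_theorem]
      rw [Unitary.conjStarAlgAut_apply]
      rw [Matrix.trace_mul_comm, ← Matrix.mul_assoc,
        Matrix.mem_unitaryGroup_iff'.mp hH.eigenvectorUnitary.2, Matrix.one_mul,
        Matrix.trace_diagonal]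
      rfl
    rw [htr] at h1
    exact_mod_cast h1.symm
  have hvn : vNEntropy ρ = ∑ i, Real.negMulLog (hH.eigenvalues i) := by
    rw [vNEntropy, dif_pos hH]
    simp [Real.negMulLog, neg_mul, Finset.sum_neg_distrib]
  have htn := traceNorm_shift ρ hH
  rw [htn] at h
  rw [hvn]
  exact scalar_main hd hH.eigenvalues hnn hsum δ hδ1 h
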